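/- In the symbolic slicing setup, define the family 𝓕 of tuples (A,x,t,τ,ω,η) with t ∈ [0,1), τ ∈ S, ω ∈ {0,…,n₁−1}^ℕ, η ∈ {0,…,n₂−1}^ℕ, and x ∈ A ⊆ X_{τ,ω,η} such that π_{τ,ω,η}(A) ⊆ (π_{m₁}(F̃_ω) × π_{m₂}(Ẽ_η)) ∩ ℓ_{m₁^t, π_{τ,ω,η}(x)}, where ℓ_{u,z} is the line through z with slope u. Then: if (A,x,t,v_t,ω,η) ∈ 𝓕, then (σ(A ∩ [x₀]), σ(x), R_θ(t), σ(v_t), σ_t(ω), σ(η)) ∈ 𝓕, where [x₀] = {y ∈ X_{v_t,ω,η} : y₀ = x₀}, σ denotes the left shift (dropping the first coordinate), R_θ(t) = t + θ (mod 1), and σ_t(ω) = σ(ω) if t ∈ [1−θ,1) and σ_t(ω) = ω if t ∈ [0,1−θ). -/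

import Mathlib

open Set Filter
noncomputable section

/-- The binary coding sequence of `t` under the rotation by `θ`:
`v_t(n) = 1` iff `t + nθ (mod 1) ∈ [1−θ, 1)`. -/
def vseq (θ t : ℝ) : ℕ → Bool := fun n => decide (1 - θ ≤ Int.fract (t + n * θ))

/-- `S`: the closure of `{v_t : t ∈ [0,1)}` in the product topology on `{0,1}^ℕ₀`. -/
def Sset (θ : ℝ) : Set (ℕ → Bool) :=
  closure { v | ∃ t ∈ Set.Ico (0 : ℝ) 1, v = vseq θ t }

/-- `x_{k+1}(τ)`: the (0-indexed) `k`-th position where `τ` equals `1`. -/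
def nthOne (τ : ℕ → Bool) (k : ℕ) : ℕ := Nat.nth (fun n => τ n = true) k

/-- The symbolic space `X_{τ,ω,η}`: sequences `((a_n,b_n))_{n≥0}` with
`b_n ∈ Λ_{η_n}`, `a_{x_{k+1}(τ)} ∈ Γ_{ω_k}`, and `a_n = 1` off `Z(τ)`. -/
def Xset (Γ Λ : ℕ → Set ℕ) (τ : ℕ → Bool) (ω η : ℕ → ℕ) : Set (ℕ → ℕ × ℕ) :=
  { c | (∀ n, (c n).2 ∈ Λ (η n)) ∧ (∀ k, (c (nthOne τ k)).1 ∈ Γ (ω k)) ∧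
        (∀ n, τ n = false → (c n).1 = 1) }

/-- The projection `π_{τ,ω,η} : X_{τ,ω,η} → [0,1]²`. -/
def piSym (m₁ m₂ : ℕ) (τ : ℕ → Bool) (c : ℕ → ℕ × ℕ) : ℝ × ℝ :=
  (∑' k : ℕ, ((c (nthOne τ k)).1 : ℝ) / (m₁ : ℝ) ^ (k + 1),
   ∑' k : ℕ, ((c k).2 : ℝ) / (m₂ : ℝ) ^ (k + 1))

/-- The symbolic metric `d(x,y) = m₂^{−min{k : x_k ≠ y_k}}`. -/
def symDist (m₂ : ℕ) (x y : ℕ → ℕ × ℕ) : ℝ :=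
  letI := Classical.dec (x = y)
  if x = y then 0 else ((m₂ : ℝ) ^ sInf { k | x k ≠ y k })⁻¹

/-- Base-`m` expansion `∑_{k≥0} d k / m^(k+1)`. -/
def expandIn (m : ℕ) (d : ℕ → ℕ) : ℝ := ∑' k : ℕ, (d k : ℝ) / (m : ℝ) ^ (k + 1)

/-- The product set `π_m(F̃_ω) = { ∑ x_k m^{-k} : x_k ∈ Γ_{ω_k} }`. -/
def prodSet (m : ℕ) (Γ : ℕ → Set ℕ) (ω : ℕ → ℕ) : Set ℝ :=
  { x | ∃ d : ℕ → ℕ, (∀ k, d k ∈ Γ (ω k)) ∧ x = expandIn m d }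

/-- The line through `z` with slope `u`. -/
def lineThrough (u : ℝ) (z : ℝ × ℝ) : Set (ℝ × ℝ) :=
  { p | p.2 - z.2 = u * (p.1 - z.1) }

/-- Membership in the family `𝓕` of symbolic slices: `x ∈ A ⊆ X_{τ,ω,η}` and
`π_{τ,ω,η}(A) ⊆ (π_{m₁}(F̃_ω) × π_{m₂}(Ẽ_η)) ∩ ℓ_{m₁^t, π_{τ,ω,η}(x)}`. -/
def memF (m₁ m₂ n₁ n₂ : ℕ) (Γ Λ : ℕ → Set ℕ) (θ : ℝ)
    (A : Set (ℕ → ℕ × ℕ)) (x : ℕ → ℕ × ℕ) (t : ℝ) (τ : ℕ → Bool) (ω η : ℕ → ℕ) : Prop :=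
  t ∈ Set.Ico (0 : ℝ) 1 ∧ τ ∈ Sset θ ∧ (∀ k, ω k < n₁) ∧ (∀ k, η k < n₂) ∧
  x ∈ A ∧ A ⊆ Xset Γ Λ τ ω η ∧
  piSym m₁ m₂ τ '' A ⊆
    (prodSet m₁ Γ ω ×ˢ prodSet m₂ Λ η) ∩ lineThrough ((m₁ : ℝ) ^ t) (piSym m₁ m₂ τ x)

/-- The left shift on sequences. -/
def shiftSeq {X : Type*} (x : ℕ → X) : ℕ → X := fun k => x (k + 1)

/-- `σ_t`: shift if `t ∈ [1−θ,1)`, identity otherwise. -/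
def sigmat (θ t : ℝ) (ω : ℕ → ℕ) : ℕ → ℕ :=
  if 1 - θ ≤ t then shiftSeq ω else ω


section AuxStmt17

lemma vseq0_true_iff (θ t : ℝ) (n : ℕ) :
    decide (1 - θ ≤ Int.fract (t + n * θ)) = true ↔
      (⌊t + n * θ⌋ : ℝ) + 1 ≤ t + (n + 1 : ℕ) * θ := by
  rw [decide_eq_true_iff, Int.fract]
  have h : ((n + 1 : ℕ) : ℝ) * θ = n * θ + θ := by push_cast; ring
  rw [h]
  constructor <;> intro hh <;> linarith

lemma fract_fract_add (a b : ℝ) : Int.fract (Int.fract a + b) = Int.fract (a + b) := by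
  have h : Int.fract a + b = a + b - (⌊a⌋ : ℝ) := by rw [Int.fract]; ring
  rw [h, Int.fract_sub_intCast]

lemma vseq_ones_infinite {θ : ℝ} (hθ : 0 < θ) (t : ℝ) :
    {n : ℕ | decide (1 - θ ≤ Int.fract (t + n * θ)) = true}.Infinite := by
  by_contra hfin
  rw [Set.not_infinite] at hfin
  obtain ⟨N, hN⟩ := hfin.bddAbove
  have hfalse : ∀ k : ℕ, ¬ ((⌊t + (N + 1 + k : ℕ) * θ⌋ : ℝ) + 1 ≤ t + ((N + 1 + k) + 1 : ℕ) * θ) := by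
    intro k hk
    have : (N + 1 + k) ∈ {n : ℕ | decide (1 - θ ≤ Int.fract (t + n * θ)) = true} :=
      (vseq0_true_iff θ t (N + 1 + k)).mpr hk
    have := hN this
    omega
  have claim : ∀ k : ℕ, t + (N + 1 + k : ℕ) * θ < (⌊t + (N + 1 : ℕ) * θ⌋ : ℝ) + 1 := by
    intro k
    induction k with
    | zero => simpa using Int.lt_floor_add_one (t + (N + 1 : ℕ) * θ)
    | succ k ih =>
        have hfl : ⌊t + (N + 1 + k : ℕ) * θ⌋ ≤ ⌊t + (N + 1 : ℕ) * θ⌋ := by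
          have := Int.floor_lt.mpr (by push_cast; push_cast at ih; linarith :
            t + (N + 1 + k : ℕ) * θ < ((⌊t + (N + 1 : ℕ) * θ⌋ + 1 : ℤ) : ℝ))
          omega
        have h2 := hfalse k
        push_neg at h2
        have hflR : ((⌊t + (N + 1 + k : ℕ) * θ⌋ : ℤ) : ℝ) ≤ ((⌊t + (N + 1 : ℕ) * θ⌋ : ℤ) : ℝ) := by
          exact_mod_cast hfl
        have he : ((N + 1 + (k + 1) : ℕ) : ℝ) = ((N + 1 + k) + 1 : ℕ) := by push_cast; ring
        rw [he]
        push_cast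
        push_cast at h2 hflR
        linarith
  obtain ⟨k, hk⟩ := exists_nat_ge (((⌊t + (N + 1 : ℕ) * θ⌋ : ℝ) + 1 - t) / θ)
  have : (⌊t + (N + 1 : ℕ) * θ⌋ : ℝ) + 1 ≤ t + (N + 1 + k : ℕ) * θ := by
    have h1 : ((⌊t + (N + 1 : ℕ) * θ⌋ : ℝ) + 1 - t) ≤ k * θ := by
      rw [div_le_iff₀ hθ] at hk; linarith
    have h2 : (k : ℝ) * θ ≤ ((N + 1 + k : ℕ) : ℝ) * θ := by
      have : (k : ℝ) ≤ ((N + 1 + k : ℕ) : ℝ) := by push_cast; linarith [Nat.cast_nonneg (α := ℝ) N]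
      nlinarith
    linarith
  linarith [claim k]

lemma count_shift (τ : ℕ → Bool) (m : ℕ) :
    Nat.count (fun n => τ (n + 1) = true) m + (if τ 0 = true then 1 else 0)
      = Nat.count (fun n => τ n = true) (m + 1) := by
  induction m with
  | zero => simp [Nat.count_succ]
  | succ m ih =>
      rw [Nat.count_succ, Nat.count_succ]
      omega

lemma shift_ones_infinite {τ : ℕ → Bool} (hinf : {n | τ n = true}.Infinite) :
    {n | τ (n + 1) = true}.Infinite := by
  by_contra hfin
  rw [Set.not_infinite] at hfin
  refine hinf (Set.Finite.subset ((hfin.image (· + 1)).insert 0) ?_)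
  intro n hn
  cases n with
  | zero => exact Set.mem_insert _ _
  | succ m => exact Set.mem_insert_of_mem _ ⟨m, hn, rfl⟩

lemma nthOne_shift_true {τ : ℕ → Bool} (hinf : {n | τ n = true}.Infinite)
    (h0 : τ 0 = true) (k : ℕ) :
    nthOne (shiftSeq τ) k + 1 = nthOne τ (k + 1) := by
  have hn0 : Nat.nth (fun n => τ n = true) 0 = 0 := Nat.nth_zero_of_zero h0
  have hpos : 0 < Nat.nth (fun n => τ n = true) (k + 1) := by
    rw [← hn0]; exact Nat.nth_strictMono hinf (Nat.succ_pos k)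
  obtain ⟨m, hm⟩ : ∃ m, Nat.nth (fun n => τ n = true) (k + 1) = m + 1 :=
    ⟨_, (Nat.succ_pred_eq_of_pos hpos).symm⟩
  have hpm : τ (m + 1) = true := by
    have := Nat.nth_mem_of_infinite hinf (k + 1); rwa [hm] at this
  have hcount : Nat.count (fun n => τ (n + 1) = true) m = k := by
    have h1 := count_shift τ m
    rw [if_pos h0] at h1
    have h2 : Nat.count (fun n => τ n = true) (m + 1) = k + 1 := by
      rw [← hm]; exact Nat.count_nth_of_infinite hinf (k + 1)
    omega
  have h3 : Nat.nth (fun n => τ (n + 1) = true)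
      (Nat.count (fun n => τ (n + 1) = true) m) = m :=
    Nat.nth_count (p := fun n => τ (n + 1) = true) hpm
  rw [hcount] at h3
  show Nat.nth (fun n => shiftSeq τ n = true) k + 1 = _
  have h4 : Nat.nth (fun n => shiftSeq τ n = true) k
      = Nat.nth (fun n => τ (n + 1) = true) k := rfl
  rw [h4, h3, ← hm]
  rfl

lemma nthOne_shift_false {τ : ℕ → Bool} (hinf : {n | τ n = true}.Infinite)
    (h0 : τ 0 = false) (k : ℕ) :
    nthOne (shiftSeq τ) k + 1 = nthOne τ k := by
  have hpos : 0 < Nat.nth (fun n => τ n = true) k := by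
    rcases Nat.eq_zero_or_pos (Nat.nth (fun n => τ n = true) k) with h | h
    · have := Nat.nth_mem_of_infinite hinf k
      rw [h] at this
      rw [h0] at this
      simp at this
    · exact h
  obtain ⟨m, hm⟩ : ∃ m, Nat.nth (fun n => τ n = true) k = m + 1 :=
    ⟨_, (Nat.succ_pred_eq_of_pos hpos).symm⟩
  have hpm : τ (m + 1) = true := by
    have := Nat.nth_mem_of_infinite hinf k; rwa [hm] at this
  have hcount : Nat.count (fun n => τ (n + 1) = true) m = k := by
    have h1 := count_shift τ m
    rw [if_neg (by simp [h0])] at h1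
    have h2 : Nat.count (fun n => τ n = true) (m + 1) = k := by
      rw [← hm]; exact Nat.count_nth_of_infinite hinf k
    omega
  have h3 := Nat.nth_count (p := fun n => τ (n + 1) = true) hpm
  rw [hcount] at h3
  show Nat.nth (fun n => shiftSeq τ n = true) k + 1 = _
  have h4 : Nat.nth (fun n => shiftSeq τ n = true) k
      = Nat.nth (fun n => τ (n + 1) = true) k := rfl
  rw [h4, h3, ← hm]
  rfl

lemma summable_digits {m : ℕ} (hm : 2 ≤ m) {c : ℕ → ℕ} (C : ℕ) (hc : ∀ k, c k ≤ C) :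
    Summable (fun k : ℕ => (c k : ℝ) / (m : ℝ) ^ (k + 1)) := by
  have hm1 : (1 : ℝ) < m := by exact_mod_cast (by omega : 1 < m)
  have hg : Summable (fun k : ℕ => (C : ℝ) * ((m : ℝ)⁻¹) ^ k) :=
    (summable_geometric_of_lt_one (by positivity)
      (inv_lt_one_of_one_lt₀ hm1)).mul_left _
  refine Summable.of_nonneg_of_le (fun k => by positivity) (fun k => ?_) hg
  have h1 : (c k : ℝ) ≤ C := by exact_mod_cast hc k
  calc (c k : ℝ) / (m : ℝ) ^ (k + 1) ≤ (C : ℝ) / (m : ℝ) ^ (k + 1) := by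
        gcongr
    _ ≤ (C : ℝ) / (m : ℝ) ^ k := by
        apply div_le_div_of_nonneg_left (by positivity) (by positivity)
        exact pow_le_pow_right₀ (by linarith) (Nat.le_succ k)
    _ = (C : ℝ) * ((m : ℝ)⁻¹) ^ k := by rw [inv_pow, div_eq_mul_inv]

lemma tsum_shift_digits {m : ℕ} (hm : 2 ≤ m) {c : ℕ → ℕ} (C : ℕ) (hc : ∀ k, c k ≤ C) :
    ∑' k : ℕ, (c (k + 1) : ℝ) / (m : ℝ) ^ (k + 1)
      = m * (∑' k : ℕ, (c k : ℝ) / (m : ℝ) ^ (k + 1)) - c 0 := by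
  have hm0 : (0 : ℝ) < m := by positivity
  have hsum := summable_digits hm C hc
  have h0 := Summable.tsum_eq_zero_add hsum
  have h1 : ∀ k : ℕ, (c (k + 1) : ℝ) / (m : ℝ) ^ (k + 1 + 1)
      = (m : ℝ)⁻¹ * ((c (k + 1) : ℝ) / (m : ℝ) ^ (k + 1)) := by
    intro k
    rw [pow_succ]
    ring
  simp only [h1] at h0
  rw [tsum_mul_left] at h0
  rw [h0]
  field_simp
  ring

end AuxStmt17

/-- The family `𝓕` is invariant under the magnification dynamics:
`(A,x,t,v_t,ω,η) ∈ 𝓕` implies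
`(σ(A ∩ [x₀]), σ(x), R_θ(t), σ(v_t), σ_t(ω), σ(η)) ∈ 𝓕`. -/
theorem stmt17
    (m₁ m₂ n₁ n₂ : ℕ) (hm₂ : 2 ≤ m₂) (hm : m₂ < m₁) (hn₁ : 2 ≤ n₁) (hn₂ : 2 ≤ n₂)
    (θ : ℝ) (hθ : θ = Real.log m₂ / Real.log m₁) (hirr : Irrational θ)
    (Γ Λ : ℕ → Set ℕ)
    (hΓ : ∀ i < n₁, (Γ i).Nonempty ∧ Γ i ⊆ Set.Iio m₁)
    (hΛ : ∀ j < n₂, (Λ j).Nonempty ∧ Λ j ⊆ Set.Iio m₂)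
    (A : Set (ℕ → ℕ × ℕ)) (x : ℕ → ℕ × ℕ) (t : ℝ) (ω η : ℕ → ℕ)
    (h : memF m₁ m₂ n₁ n₂ Γ Λ θ A x t (vseq θ t) ω η) :
    memF m₁ m₂ n₁ n₂ Γ Λ θ
      (shiftSeq '' { y ∈ A | y 0 = x 0 }) (shiftSeq x) (Int.fract (t + θ))
      (shiftSeq (vseq θ t)) (sigmat θ t ω) (shiftSeq η) := by
  obtain ⟨ht, -, hω, hη, hxA, hAX, himg⟩ := h
  have hm₁R : (1 : ℝ) < m₁ := by exact_mod_cast (by omega : 1 < m₁)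
  have hm₂R : (1 : ℝ) < m₂ := by exact_mod_cast (by omega : 1 < m₂)
  have hm₁0 : (0 : ℝ) < m₁ := by positivity
  have hlog₁ : 0 < Real.log m₁ := Real.log_pos hm₁R
  have hθ0 : 0 < θ := by
    rw [hθ]; exact div_pos (Real.log_pos hm₂R) hlog₁
  have hθ1 : θ < 1 := by
    rw [hθ, div_lt_one hlog₁]
    exact Real.log_lt_log (by positivity) (by exact_mod_cast hm)
  have hpowθ : (m₁ : ℝ) ^ θ = m₂ := by
    rw [hθ, Real.rpow_def_of_pos hm₁0, mul_comm, div_mul_cancel₀ _ hlog₁.ne', Real.exp_log (by positivity)]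
  have hτ0 : vseq θ t 0 = true ↔ 1 - θ ≤ t := by
    simp only [vseq, Nat.cast_zero, zero_mul, add_zero, decide_eq_true_iff,
      Int.fract_eq_self.mpr ⟨ht.1, ht.2⟩]
  have hinf : {n | vseq θ t n = true}.Infinite := vseq_ones_infinite hθ0 t
  have hτ's : shiftSeq (vseq θ t) = vseq θ (Int.fract (t + θ)) := by
    funext n
    have key : Int.fract (Int.fract (t + θ) + n * θ) = Int.fract (t + ((n + 1 : ℕ)) * θ) := by
      rw [fract_fract_add]
      congr 1
      push_cast
      ring
    show vseq θ t (n + 1) = _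
    unfold vseq
    rw [key]
  have hSmem : shiftSeq (vseq θ t) ∈ Sset θ := by
    rw [hτ's]
    exact subset_closure ⟨_, ⟨Int.fract_nonneg _, Int.fract_lt_one _⟩, rfl⟩
  have hnth : ∀ k, nthOne (shiftSeq (vseq θ t)) k + 1
      = if 1 - θ ≤ t then nthOne (vseq θ t) (k + 1) else nthOne (vseq θ t) k := by
    intro k
    by_cases hc : 1 - θ ≤ t
    · rw [if_pos hc]; exact nthOne_shift_true hinf (hτ0.mpr hc) k
    · rw [if_neg hc]
      exact nthOne_shift_false hinf (Bool.eq_false_iff.mpr fun hh => hc (hτ0.mp hh)) k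
  have hXsub : ∀ y ∈ A, shiftSeq y ∈ Xset Γ Λ (shiftSeq (vseq θ t)) (sigmat θ t ω) (shiftSeq η) := by
    intro y hy
    obtain ⟨hy2, hy1, hy0⟩ := hAX hy
    refine ⟨fun n => hy2 (n + 1), fun k => ?_, fun n hn => hy0 (n + 1) hn⟩
    have hk := hnth k
    show (y (nthOne (shiftSeq (vseq θ t)) k + 1)).1 ∈ Γ (sigmat θ t ω k)
    by_cases hc : 1 - θ ≤ t
    · rw [if_pos hc] at hk
      rw [hk]
      simp only [sigmat, if_pos hc]
      exact hy1 (k + 1)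
    · rw [if_neg hc] at hk
      rw [hk]
      simp only [sigmat, if_neg hc]
      exact hy1 k
  have hbound2 : ∀ y ∈ A, ∀ k, (y k).2 ≤ m₂ := fun y hy k =>
    le_of_lt ((hΛ (η k) (hη k)).2 ((hAX hy).1 k))
  have hbound1 : ∀ y ∈ A, ∀ k, (y (nthOne (vseq θ t) k)).1 ≤ m₁ := fun y hy k =>
    le_of_lt ((hΓ (ω k) (hω k)).2 ((hAX hy).2.1 k))
  have hπ2 : ∀ y ∈ A, (piSym m₁ m₂ (shiftSeq (vseq θ t)) (shiftSeq y)).2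
      = m₂ * (piSym m₁ m₂ (vseq θ t) y).2 - ((y 0).2 : ℝ) := by
    intro y hy
    exact tsum_shift_digits (c := fun k => (y k).2) hm₂ m₂ (hbound2 y hy)
  have hπ1 : ∀ y ∈ A, (piSym m₁ m₂ (shiftSeq (vseq θ t)) (shiftSeq y)).1
      = if 1 - θ ≤ t then m₁ * (piSym m₁ m₂ (vseq θ t) y).1 - ((y 0).1 : ℝ)
        else (piSym m₁ m₂ (vseq θ t) y).1 := by
    intro y hy
    by_cases hc : 1 - θ ≤ t
    · rw [if_pos hc]
      have h0 : nthOne (vseq θ t) 0 = 0 := Nat.nth_zero_of_zero (hτ0.mpr hc)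
      have heq : (piSym m₁ m₂ (shiftSeq (vseq θ t)) (shiftSeq y)).1
          = ∑' k : ℕ, ((y (nthOne (vseq θ t) (k + 1))).1 : ℝ) / (m₁ : ℝ) ^ (k + 1) := by
        show (∑' k : ℕ, ((shiftSeq y (nthOne (shiftSeq (vseq θ t)) k)).1 : ℝ) / (m₁ : ℝ) ^ (k + 1)) = _
        refine tsum_congr fun k => ?_
        have hidx : nthOne (shiftSeq (vseq θ t)) k + 1 = nthOne (vseq θ t) (k + 1) := by
          have := hnth k; rwa [if_pos hc] at this
        show ((y (nthOne (shiftSeq (vseq θ t)) k + 1)).1 : ℝ) / (m₁ : ℝ) ^ (k + 1) = _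
        rw [hidx]
      have hts : (∑' k : ℕ, ((y (nthOne (vseq θ t) (k + 1))).1 : ℝ) / (m₁ : ℝ) ^ (k + 1))
          = m₁ * (∑' k : ℕ, ((y (nthOne (vseq θ t) k)).1 : ℝ) / (m₁ : ℝ) ^ (k + 1))
            - ((y (nthOne (vseq θ t) 0)).1 : ℝ) :=
        tsum_shift_digits (by omega) m₁ (hbound1 y hy)
      rw [heq, hts, h0]
      rfl
    · rw [if_neg hc]
      show (∑' k : ℕ, ((shiftSeq y (nthOne (shiftSeq (vseq θ t)) k)).1 : ℝ) / (m₁ : ℝ) ^ (k + 1))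
          = ∑' k : ℕ, ((y (nthOne (vseq θ t) k)).1 : ℝ) / (m₁ : ℝ) ^ (k + 1)
      refine tsum_congr fun k => ?_
      have hidx : nthOne (shiftSeq (vseq θ t)) k + 1 = nthOne (vseq θ t) k := by
        have := hnth k; rwa [if_neg hc] at this
      show ((y (nthOne (shiftSeq (vseq θ t)) k + 1)).1 : ℝ) / (m₁ : ℝ) ^ (k + 1) = _
      rw [hidx]
  have hscale : (m₁ : ℝ) ^ (Int.fract (t + θ)) * (if 1 - θ ≤ t then (m₁ : ℝ) else 1)
      = m₂ * (m₁ : ℝ) ^ t := by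
    by_cases hc : 1 - θ ≤ t
    · rw [if_pos hc]
      have hfl : ⌊t + θ⌋ = 1 := by
        rw [Int.floor_eq_iff]
        constructor
        · push_cast; linarith
        · push_cast; linarith [ht.2]
      have hfr : Int.fract (t + θ) = t + θ - 1 := by
        rw [Int.fract, hfl]; norm_num
      rw [hfr]
      calc (m₁ : ℝ) ^ (t + θ - 1) * (m₁ : ℝ)
          = (m₁ : ℝ) ^ (t + θ - 1) * (m₁ : ℝ) ^ (1 : ℝ) := by rw [Real.rpow_one]
        _ = (m₁ : ℝ) ^ (t + θ) := by rw [← Real.rpow_add hm₁0]; norm_num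
        _ = (m₁ : ℝ) ^ t * (m₁ : ℝ) ^ θ := Real.rpow_add hm₁0 t θ
        _ = m₂ * (m₁ : ℝ) ^ t := by rw [hpowθ]; ring
    · rw [if_neg hc, mul_one]
      have hfr : Int.fract (t + θ) = t + θ :=
        Int.fract_eq_self.mpr ⟨by linarith [ht.1], by linarith⟩
      rw [hfr, Real.rpow_add hm₁0, hpowθ]; ring
  have hline : ∀ y ∈ A, y 0 = x 0 →
      piSym m₁ m₂ (shiftSeq (vseq θ t)) (shiftSeq y)
        ∈ lineThrough ((m₁ : ℝ) ^ Int.fract (t + θ))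
            (piSym m₁ m₂ (shiftSeq (vseq θ t)) (shiftSeq x)) := by
    intro y hy hy0
    have hl := (himg ⟨y, hy, rfl⟩).2
    simp only [lineThrough, Set.mem_setOf_eq] at hl ⊢
    rw [hπ2 y hy, hπ2 x hxA, hπ1 y hy, hπ1 x hxA, hy0]
    by_cases hc : 1 - θ ≤ t
    · rw [if_pos hc] at hscale ⊢
      rw [if_pos hc]
      linear_combination (m₂ : ℝ) * hl
        - ((piSym m₁ m₂ (vseq θ t) y).1 - (piSym m₁ m₂ (vseq θ t) x).1) * hscale
    · rw [if_neg hc, mul_one] at hscale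
      rw [if_neg hc, if_neg hc]
      linear_combination (m₂ : ℝ) * hl
        - ((piSym m₁ m₂ (vseq θ t) y).1 - (piSym m₁ m₂ (vseq θ t) x).1) * hscale
  refine ⟨⟨Int.fract_nonneg _, Int.fract_lt_one _⟩, hSmem, ?_, fun k => hη (k + 1),
    ⟨x, ⟨hxA, rfl⟩, rfl⟩, ?_, ?_⟩
  · intro k
    unfold sigmat
    split
    · exact hω (k + 1)
    · exact hω k
  · rintro z ⟨y, ⟨hyA, -⟩, rfl⟩
    exact hXsub y hyA
  · rintro p ⟨z, ⟨y, ⟨hyA, hy0⟩, rfl⟩, rfl⟩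
    obtain ⟨hY2, hY1, hY0⟩ := hXsub y hyA
    exact ⟨⟨⟨fun k => (shiftSeq y (nthOne (shiftSeq (vseq θ t)) k)).1, hY1, rfl⟩,
      ⟨fun k => (shiftSeq y k).2, hY2, rfl⟩⟩, hline y hyA hy0⟩
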